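/- Let X be a normed space and Y a Banach space, let K ⊆ Y be a closed convex cone, and let f : X → Y be strongly α(·)-k-paraconvex on an open convex set Ω ⊆ X with constant C ≥ 0 and k ∈ K \ {0}. Then for every x₀ ∈ Ω and every admissible direction h ∈ X with ‖h‖ = 1, the mapping φ(t) := (f(x₀+th) − f(x₀+t₀h))/(t−t₀) + C·(α(t−t₀)/(t−t₀))·k (defined for t > t₀, with t₀ ∈ ℝ) is α(·)-nondecreasing, i.e. φ(t) − φ(t₁) + C·(α(t₁−t₀)/(t₁−t₀))·k ∈ K for all t₀ < t₁ < t (with x₀+th, x₀+t₁h, x₀+t₀h ∈ Ω). -/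

import Mathlib

open Filter Topology Set

/-- Let `f : X → Y` be strongly `α(·)`-`k`-paraconvex on an open convex
`Ω ⊆ X` with constant `C ≥ 0`, `k ∈ K \ {0}`. For `x₀ ∈ Ω` and an admissible direction `h`
with `‖h‖ = 1`, the map `φ(t) = (f(x₀+th) − f(x₀+t₀h))/(t−t₀) + C (α(t−t₀)/(t−t₀)) k`
(for `t > t₀`) is `α(·)`-nondecreasing: `φ(t) − φ(t₁) + C (α(t₁−t₀)/(t₁−t₀)) k ∈ K`
for all `t₀ < t₁ < t` (with the relevant points in `Ω`). -/
theorem paraconvex_difference_quotient_alpha_nondecreasing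
    {X Y : Type*} [NormedAddCommGroup X] [NormedSpace ℝ X]
    [NormedAddCommGroup Y] [NormedSpace ℝ Y] [CompleteSpace Y]
    (K : Set Y) (hKclosed : IsClosed K) (hKconv : Convex ℝ K)
    (hKcone : ∀ ⦃c : ℝ⦄, 0 ≤ c → ∀ ⦃y⦄, y ∈ K → c • y ∈ K)
    (k : Y) (hk : k ∈ K) (hk0 : k ≠ 0)
    (Ω : Set X) (hΩopen : IsOpen Ω) (hΩconv : Convex ℝ Ω)
    (α : ℝ → ℝ) (hαnonneg : ∀ t, 0 ≤ t → 0 ≤ α t) (hαmono : MonotoneOn α (Ici 0))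
    (hαlim : Tendsto (fun t => α t / t) (𝓝[>] (0 : ℝ)) (𝓝 0))
    (f : X → Y) (hf : Continuous f) (C : ℝ) (hC : 0 ≤ C)
    (hpara : ∀ x ∈ Ω, ∀ y ∈ Ω, ∀ l : ℝ, 0 ≤ l → l ≤ 1 →
        l • f x + (1 - l) • f y + (C * min l (1 - l) * α ‖x - y‖) • k
          - f (l • x + (1 - l) • y) ∈ K)
    (x₀ : X) (hx₀ : x₀ ∈ Ω) (h : X) (hnorm : ‖h‖ = 1)
    (hadm : ∃ ε > 0, ∀ t : ℝ, 0 < t → t < ε → x₀ + t • h ∈ Ω)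
    (t₀ t₁ t : ℝ) (ht₀t₁ : t₀ < t₁) (ht₁t : t₁ < t)
    (hmem₀ : x₀ + t₀ • h ∈ Ω) (hmem₁ : x₀ + t₁ • h ∈ Ω) (hmem : x₀ + t • h ∈ Ω) :
    ((t - t₀)⁻¹ • (f (x₀ + t • h) - f (x₀ + t₀ • h)) + (C * (α (t - t₀) / (t - t₀))) • k)
      - ((t₁ - t₀)⁻¹ • (f (x₀ + t₁ • h) - f (x₀ + t₀ • h))
          + (C * (α (t₁ - t₀) / (t₁ - t₀))) • k)
      + (C * (α (t₁ - t₀) / (t₁ - t₀))) • k ∈ K := by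

  have hd : (0:ℝ) < t - t₀ := by linarith
  have hd1 : (0:ℝ) < t₁ - t₀ := by linarith
  set l : ℝ := (t₁ - t₀) / (t - t₀) with hl
  have hl0 : 0 ≤ l := by positivity
  have hl1 : l ≤ 1 := by
    rw [hl, div_le_one hd]; linarith
  have hmid : l • (x₀ + t • h) + (1 - l) • (x₀ + t₀ • h) = x₀ + t₁ • h := by
    have hlt : l * t + (1 - l) * t₀ = t₁ := by
      rw [hl]; field_simp; ring
    rw [smul_add, smul_add, smul_smul, smul_smul]
    rw [show l • x₀ + (l * t) • h + ((1 - l) • x₀ + ((1 - l) * t₀) • h)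
        = (l + (1 - l)) • x₀ + (l * t + (1 - l) * t₀) • h by
      rw [add_smul, add_smul]; abel]
    rw [hlt]; norm_num
  have hnrm : ‖(x₀ + t • h) - (x₀ + t₀ • h)‖ = t - t₀ := by
    have : (x₀ + t • h) - (x₀ + t₀ • h) = (t - t₀) • h := by
      rw [sub_smul]; abel
    rw [this, norm_smul, hnorm, Real.norm_eq_abs, abs_of_pos hd, mul_one]
  have e1 := hpara _ hmem _ hmem₀ l hl0 hl1
  rw [hnrm, hmid] at e1
  have e2 := hKcone (le_of_lt (inv_pos.mpr hd1)) e1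
  set μ : ℝ := C * (α (t - t₀) / (t - t₀)) - (t₁ - t₀)⁻¹ * (C * min l (1 - l) * α (t - t₀))
    with hμ
  have hμ0 : 0 ≤ μ := by
    have hmin : min l (1 - l) ≤ l := min_le_left _ _
    have hA : 0 ≤ α (t - t₀) := hαnonneg _ hd.le
    have h1 : (t₁ - t₀)⁻¹ * (C * min l (1 - l) * α (t - t₀))
        ≤ (t₁ - t₀)⁻¹ * (C * l * α (t - t₀)) := by
      apply mul_le_mul_of_nonneg_left _ (le_of_lt (inv_pos.mpr hd1))
      apply mul_le_mul_of_nonneg_right _ hA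
      exact mul_le_mul_of_nonneg_left hmin hC
    have h2 : (t₁ - t₀)⁻¹ * (C * l * α (t - t₀)) = C * (α (t - t₀) / (t - t₀)) := by
      rw [hl]; field_simp
    rw [hμ]; linarith
  have e3 := hKcone hμ0 hk
  have kadd : ∀ a ∈ K, ∀ b ∈ K, a + b ∈ K := by
    intro a ha b hb
    have h12 := hKconv ha hb (by norm_num : (0:ℝ) ≤ 1/2) (by norm_num : (0:ℝ) ≤ 1/2)
      (by norm_num)
    have := hKcone (by norm_num : (0:ℝ) ≤ 2) h12
    have heq : (2:ℝ) • ((1/2 : ℝ) • a + (1/2 : ℝ) • b) = a + b := by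
      rw [smul_add, smul_smul, smul_smul]; norm_num
    rwa [heq] at this
  have key :
      ((t - t₀)⁻¹ • (f (x₀ + t • h) - f (x₀ + t₀ • h)) + (C * (α (t - t₀) / (t - t₀))) • k)
      - ((t₁ - t₀)⁻¹ • (f (x₀ + t₁ • h) - f (x₀ + t₀ • h))
          + (C * (α (t₁ - t₀) / (t₁ - t₀))) • k)
      + (C * (α (t₁ - t₀) / (t₁ - t₀))) • k
      = (t₁ - t₀)⁻¹ • (l • f (x₀ + t • h) + (1 - l) • f (x₀ + t₀ • h)
          + (C * min l (1 - l) * α (t - t₀)) • k - f (x₀ + t₁ • h)) + μ • k := by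
    rw [hμ, hl]
    match_scalars
    all_goals field_simp
    all_goals try ring
    all_goals tauto
  rw [key]
  exact kadd _ e2 _ e3
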